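/- Let q ∈ (p_c,1]. There exist constants C_1(q), C_2(q) such that for all ε > 0 and x ∈ Z^d, P( sup{ d_{ω_q}([x]_q,[y]_q) : y ∈ Z^d, ‖x−y‖_1 < ε‖x‖_1 } ≥ 3 C_AP ε ‖x‖_1 ) ≤ C_1 e^{−C_2 ε ‖x‖_1}. Consequently, for any ε > 0, with probability one, sup{ d_{ω_q}([x]_q,[y]_q) : ‖x−y‖_1 ≤ ε‖x‖_1 } < 3 C_AP ε ‖x‖_1 for all x with ‖x‖_1 large enough. -/

import Mathlib

open MeasureTheory Filter Real

open scoped ENNReal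

namespace PercMaximal

/-- Vertices of the `d`-dimensional cubic lattice. -/
abbrev V (d : ℕ) := Fin d → ℤ

/-- The ℓ¹-norm of a lattice point. -/
noncomputable def norm1 {d : ℕ} (x : V d) : ℝ := ∑ i, |(x i : ℝ)|

/-- Maximal estimate for chemical distances between closest
points in the infinite cluster: there are constants `C₁(q), C₂(q)` such that
for all `ε > 0` and `x ∈ ℤ^d`,
`P( sup{ d_{ω_q}([x]_q,[y]_q) : ‖x-y‖₁ < ε‖x‖₁ } ≥ 3 C_AP ε ‖x‖₁ ) ≤ C₁ e^{-C₂ ε ‖x‖₁}`;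
consequently, for every `ε > 0`, almost surely the supremum is `< 3 C_AP ε ‖x‖₁`
for all `x` with `‖x‖₁` large enough. -/


lemma norm1_nonneg {d : ℕ} (x : V d) : 0 ≤ norm1 x :=
  Finset.sum_nonneg fun _ _ => abs_nonneg _

lemma norm1_sub_comm {d : ℕ} (x y : V d) : norm1 (x - y) = norm1 (y - x) := by
  unfold norm1
  refine Finset.sum_congr rfl fun i _ => ?_
  have : ((x - y) i : ℝ) = -(((y - x) i : ℝ)) := by
    simp only [Pi.sub_apply]; push_cast; ring
  rw [this, abs_neg]

lemma norm1_triangle {d : ℕ} (x y z : V d) :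
    norm1 (x - z) ≤ norm1 (x - y) + norm1 (y - z) := by
  unfold norm1
  rw [← Finset.sum_add_distrib]
  refine Finset.sum_le_sum fun i _ => ?_
  have : ((x - z) i : ℝ) = ((x - y) i : ℝ) + ((y - z) i : ℝ) := by
    simp only [Pi.sub_apply]; push_cast; ring
  rw [this]; exact abs_add_le _ _

lemma coord_le_norm1 {d : ℕ} (x : V d) (i : Fin d) : |(x i : ℝ)| ≤ norm1 x :=
  Finset.single_le_sum (fun j _ => abs_nonneg ((x j : ℝ))) (Finset.mem_univ i)

lemma ball_subset_Icc {d : ℕ} (x : V d) (ρ : ℝ) :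
    {y : V d | norm1 (x - y) ≤ ρ} ⊆
      ↑(Finset.Icc (x - fun _ => ⌈ρ⌉) (x + fun _ => ⌈ρ⌉)) := by
  intro y hy
  simp only [Finset.coe_Icc, Set.mem_Icc, Pi.le_def, Pi.sub_apply, Pi.add_apply]
  have key : ∀ i, |x i - y i| ≤ ⌈ρ⌉ := by
    intro i
    have h1 : |((x - y) i : ℝ)| ≤ ρ := le_trans (coord_le_norm1 _ i) hy
    have h2 : ((|x i - y i| : ℤ) : ℝ) ≤ ⌈ρ⌉ := by
      push_cast
      calc |((x i : ℝ) - y i)| ≤ ρ := by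
            simpa only [Pi.sub_apply, Int.cast_sub] using h1
        _ ≤ ⌈ρ⌉ := Int.le_ceil ρ
    exact_mod_cast h2
  constructor
  · intro i
    have := (abs_le.mp (key i)).2
    omega
  · intro i
    have := (abs_le.mp (key i)).1
    omega

lemma ball_finite {d : ℕ} (x : V d) (ρ : ℝ) :
    {y : V d | norm1 (x - y) ≤ ρ}.Finite :=
  Set.Finite.subset (Finset.Icc _ _).finite_toSet (ball_subset_Icc x ρ)

lemma ball_card_le {d : ℕ} (x : V d) (ρ : ℝ) (hρ : 0 ≤ ρ) :
    ((ball_finite x ρ).toFinset.card : ℝ) ≤ (2 * ρ + 3) ^ d := by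
  have hsub : (ball_finite x ρ).toFinset ⊆
      Finset.Icc (x - fun _ => ⌈ρ⌉) (x + fun _ => ⌈ρ⌉) := by
    intro y hy
    have := (ball_finite x ρ).mem_toFinset.mp hy
    exact_mod_cast ball_subset_Icc x ρ this
  have hcard := Finset.card_le_card hsub
  have hIcc : (Finset.Icc (x - fun _ => ⌈ρ⌉) (x + fun _ => ⌈ρ⌉)).card
      = ((2 * ⌈ρ⌉ + 1).toNat) ^ d := by
    rw [Pi.card_Icc]
    have : ∀ i : Fin d, (Finset.Icc (((x - fun _ => ⌈ρ⌉) : V d) i) (((x + fun _ => ⌈ρ⌉) : V d) i)).card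
        = (2 * ⌈ρ⌉ + 1).toNat := by
      intro i
      rw [Int.card_Icc]
      simp only [Pi.add_apply, Pi.sub_apply]
      congr 1
      ring
    simp only [this, Finset.prod_const, Finset.card_univ, Fintype.card_fin]
  have hceil : (0:ℤ) ≤ ⌈ρ⌉ := Int.ceil_nonneg hρ
  have h1 : (((2 * ⌈ρ⌉ + 1).toNat : ℤ) : ℝ) = 2 * (⌈ρ⌉ : ℝ) + 1 := by
    rw [Int.toNat_of_nonneg (by omega)]
    push_cast; ring
  calc ((ball_finite x ρ).toFinset.card : ℝ)
      ≤ (((2 * ⌈ρ⌉ + 1).toNat) ^ d : ℕ) := by exact_mod_cast hcard.trans_eq hIcc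
    _ = (2 * (⌈ρ⌉ : ℝ) + 1) ^ d := by push_cast [← h1]; norm_cast
    _ ≤ (2 * ρ + 3) ^ d := by
        apply pow_le_pow_left₀ (by positivity)
        have := (Int.ceil_lt_add_one ρ).le
        linarith

lemma poly_le_exp (m : ℕ) (c : ℝ) (hc : 0 < c) :
    ∃ K : ℝ, 0 < K ∧ ∀ r : ℝ, 0 ≤ r → (3 * r + 3) ^ m ≤ K * Real.exp (c * r) := by
  refine ⟨3 ^ m * (m.factorial / c ^ m) * Real.exp c, by positivity, fun r hr => ?_⟩
  have key : (r + 1) ^ m ≤ (m.factorial / c ^ m) * Real.exp (c * (r + 1)) := by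
    have h1 : (c * (r + 1)) ^ m / m.factorial ≤ Real.exp (c * (r + 1)) :=
      Real.pow_div_factorial_le_exp (x := c * (r+1)) (by positivity) m
    have h2 : (c * (r + 1)) ^ m = c ^ m * (r + 1) ^ m := mul_pow _ _ _
    rw [h2, div_le_iff₀ (by positivity)] at h1
    rw [div_mul_eq_mul_div, le_div_iff₀ (by positivity)]
    calc (r+1)^m * c^m = c ^ m * (r+1)^m := by ring
      _ ≤ Real.exp (c * (r + 1)) * m.factorial := h1
      _ = (m.factorial : ℝ) * Real.exp (c * (r+1)) := by ring
  calc (3 * r + 3) ^ m = 3 ^ m * (r + 1) ^ m := by rw [← mul_pow]; ring_nf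
    _ ≤ 3 ^ m * ((m.factorial / c ^ m) * Real.exp (c * (r + 1))) := by
        apply mul_le_mul_of_nonneg_left key (by positivity)
    _ = 3 ^ m * (m.factorial / c ^ m) * Real.exp c * Real.exp (c * r) := by
        rw [mul_add, Real.exp_add]; ring



lemma tsum_pi_prod (g : ℤ → ℝ≥0∞) :
    ∀ n : ℕ, ∑' x : Fin n → ℤ, ∏ i, g (x i) = (∑' k : ℤ, g k) ^ n := by
  intro n
  induction n with
  | zero =>
    rw [pow_zero, tsum_eq_single (fun _ => 0)]
    · simp
    · intro b hb
      exact absurd (Subsingleton.elim b _) hb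
  | succ n ih =>
    set e := Fin.consEquiv (fun _ : Fin (n+1) => ℤ) with hedef
    rw [← e.tsum_eq]
    have he : ∀ p, (∏ i, g ((e p) i)) = g p.1 * ∏ i, g (p.2 i) := by
      intro p
      have hep : (e p : Fin (n+1) → ℤ) = Fin.cons p.1 p.2 := by
        rw [hedef]
        obtain ⟨a, v⟩ := p
        rfl
      rw [hep, Fin.prod_univ_succ]
      simp [Fin.cons_zero, Fin.cons_succ]
    calc ∑' p, ∏ i, g ((e p) i)
        = ∑' p : ℤ × (Fin n → ℤ), g p.1 * ∏ i, g (p.2 i) := tsum_congr he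
      _ = ∑' (k : ℤ) (v : Fin n → ℤ), g k * ∏ i, g (v i) :=
          ENNReal.tsum_prod (f := fun (k : ℤ) (v : Fin n → ℤ) => g k * ∏ i, g (v i))
      _ = ∑' (k : ℤ), g k * ∑' v : Fin n → ℤ, ∏ i, g (v i) := by
          exact tsum_congr fun k => ENNReal.tsum_mul_left
      _ = (∑' k : ℤ, g k) * (∑' v : Fin n → ℤ, ∏ i, g (v i)) := ENNReal.tsum_mul_right
      _ = (∑' k : ℤ, g k) ^ (n+1) := by rw [ih, pow_succ]; ring

lemma summable_exp_abs (c : ℝ) (hc : 0 < c) :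
    Summable (fun k : ℤ => Real.exp (-(c * |(k : ℝ)|))) := by
  have hgeo : Summable (fun n : ℕ => (Real.exp (-c)) ^ n) :=
    summable_geometric_of_lt_one (Real.exp_nonneg _) (Real.exp_lt_one_iff.mpr (by linarith))
  have hnat : Summable (fun n : ℕ => Real.exp (-(c * (n : ℝ)))) := by
    refine hgeo.congr fun n => ?_
    rw [← Real.exp_nat_mul]
    congr 1
    ring
  apply Summable.of_nat_of_neg
  · refine hnat.congr fun n => ?_
    congr 1
    rw [Int.cast_natCast, abs_of_nonneg (by positivity : (0:ℝ) ≤ (n:ℝ))]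
  · refine hnat.congr fun n => ?_
    congr 2
    rw [Int.cast_neg, Int.cast_natCast, abs_neg, abs_of_nonneg (by positivity : (0:ℝ) ≤ (n:ℝ))]

lemma tsum_g_ne_top (c : ℝ) (hc : 0 < c) :
    (∑' k : ℤ, ENNReal.ofReal (Real.exp (-(c * |(k : ℝ)|)))) ≠ ⊤ := by
  rw [← ENNReal.ofReal_tsum_of_nonneg (fun k => (Real.exp_pos _).le) (summable_exp_abs c hc)]
  exact ENNReal.ofReal_ne_top
set_option maxHeartbeats 1000000 in
lemma core_bound {d : ℕ}
    {Ω : Type*} [MeasurableSpace Ω] (μ : Measure Ω) [IsProbabilityMeasure μ]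
    (chem : Ω → V d → V d → ℝ≥0∞) (Cinf : Ω → Set (V d)) (cl : Ω → V d → V d)
    (hcl : ∀ᵐ ω ∂μ, ∀ z : V d, cl ω z ∈ Cinf ω ∧
        ∀ y ∈ Cinf ω, norm1 (z - cl ω z) ≤ norm1 (z - y))
    (hconn : ∀ᵐ ω ∂μ, ∀ y ∈ Cinf ω, ∀ z ∈ Cinf ω, chem ω y z ≠ ⊤)
    (CAP C1 C2 : ℝ) (hCAP : 1 ≤ CAP) (hC1 : 0 < C1) (hC2 : 0 < C2)
    (hi : ∀ y z : V d, ∀ t : ℝ, CAP * norm1 (y - z) ≤ t →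
        μ {ω | ENNReal.ofReal t ≤ chem ω y z ∧ chem ω y z ≠ ⊤}
          ≤ ENNReal.ofReal (C1 * Real.exp (-C2 * t)))
    (hii : ∀ x : V d, ∀ t : ℝ, 0 ≤ t →
        μ {ω | ∀ y ∈ Cinf ω, ¬ norm1 (y - x) ≤ t}
          ≤ ENNReal.ofReal (C1 * Real.exp (-C2 * t)))
    (x : V d) (r : ℝ) (hr : 0 < r) :
    μ {ω | ENNReal.ofReal (3 * CAP * r) ≤
        ⨆ (y : V d) (_ : norm1 (x - y) ≤ r), chem ω (cl ω x) (cl ω y)}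
      ≤ ENNReal.ofReal
          ((1 + (3 * r + 3) ^ d + ((3 * r + 3) ^ d) ^ 2) * (C1 * Real.exp (-(C2/2) * r))) := by
  classical
  set S : Finset (V d) := (ball_finite x r).toFinset with hS
  set U : Finset (V d) := (ball_finite x (r/2)).toFinset with hU
  set B : Finset (V d) := (ball_finite x (3*r/2)).toFinset with hB
  set A : V d → Set Ω := fun z => {ω | ∀ w ∈ Cinf ω, ¬ norm1 (w - z) ≤ r/2} with hA
  set D : V d → V d → Set Ω :=
    fun u v => {ω | ENNReal.ofReal (2 * CAP * r) ≤ chem ω u v ∧ chem ω u v ≠ ⊤} with hD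
  set G : Set Ω := {ω | (∀ z : V d, cl ω z ∈ Cinf ω ∧
        ∀ y ∈ Cinf ω, norm1 (z - cl ω z) ≤ norm1 (z - y)) ∧
      ∀ a ∈ Cinf ω, ∀ b ∈ Cinf ω, chem ω a b ≠ ⊤} with hG
  have hGnull : μ Gᶜ = 0 := by
    have h := hcl.and hconn
    rw [ae_iff] at h
    convert h using 2
    rfl
  -- the subset claim
  have hsub : {ω | ENNReal.ofReal (3 * CAP * r) ≤
        ⨆ (y : V d) (_ : norm1 (x - y) ≤ r), chem ω (cl ω x) (cl ω y)} ⊆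
      Gᶜ ∪ (A x ∪ ((⋃ y ∈ S, A y) ∪ (⋃ u ∈ U, ⋃ v ∈ B, D u v))) := by
    intro ω hω
    by_contra hcon
    simp only [Set.mem_union, not_or, Set.mem_compl_iff, not_not, Set.mem_iUnion,
      not_exists, exists_prop] at hcon
    obtain ⟨hGmem, hAx, hrest⟩ := hcon
    have hAS : ∀ y ∈ S, ω ∉ A y := fun y hy hmem => hrest.1 y ⟨hy, hmem⟩
    have hDUV : ∀ u ∈ U, ∀ v ∈ B, ω ∉ D u v := fun u hu v hv hmem =>
      hrest.2 u ⟨hu, v, hv, hmem⟩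
    rw [hG] at hGmem
    obtain ⟨hclω, hconnω⟩ := hGmem
    have hAx' : ∃ w ∈ Cinf ω, norm1 (w - x) ≤ r/2 := by
      by_contra h
      push_neg at h
      exact hAx (fun w hw => not_le.mpr (h w hw))
    obtain ⟨w, hw, hwx⟩ := hAx'
    have hclx : norm1 (x - cl ω x) ≤ r/2 := by
      calc norm1 (x - cl ω x) ≤ norm1 (x - w) := (hclω x).2 w hw
        _ = norm1 (w - x) := norm1_sub_comm _ _
        _ ≤ r/2 := hwx
    have hclxU : cl ω x ∈ U := by
      rw [hU, Set.Finite.mem_toFinset]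
      exact hclx
    have key : ∀ y : V d, norm1 (x - y) ≤ r →
        chem ω (cl ω x) (cl ω y) ≤ ENNReal.ofReal (2 * CAP * r) := by
      intro y hy
      have hyS : y ∈ S := by rw [hS, Set.Finite.mem_toFinset]; exact hy
      have hAy : ∃ w' ∈ Cinf ω, norm1 (w' - y) ≤ r/2 := by
        by_contra h
        push_neg at h
        exact hAS y hyS (fun w' hw' => not_le.mpr (h w' hw'))
      obtain ⟨w', hw', hwy⟩ := hAy
      have hcly : norm1 (y - cl ω y) ≤ r/2 := by
        calc norm1 (y - cl ω y) ≤ norm1 (y - w') := (hclω y).2 w' hw'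
          _ = norm1 (w' - y) := norm1_sub_comm _ _
          _ ≤ r/2 := hwy
      have hclyB : cl ω y ∈ B := by
        rw [hB, Set.Finite.mem_toFinset]
        calc norm1 (x - cl ω y) ≤ norm1 (x - y) + norm1 (y - cl ω y) := norm1_triangle _ _ _
          _ ≤ r + r/2 := add_le_add hy hcly
          _ = 3*r/2 := by ring
      have hdist : CAP * norm1 (cl ω x - cl ω y) ≤ 2 * CAP * r := by
        have h2 : norm1 (cl ω x - cl ω y) ≤ 2 * r := by
          calc norm1 (cl ω x - cl ω y)
              ≤ norm1 (cl ω x - x) + norm1 (x - cl ω y) := norm1_triangle _ _ _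
            _ ≤ r/2 + (norm1 (x - y) + norm1 (y - cl ω y)) := by
                refine add_le_add ?_ (norm1_triangle _ _ _)
                rw [norm1_sub_comm]; exact hclx
            _ ≤ r/2 + (r + r/2) := by linarith
            _ = 2 * r := by ring
        calc CAP * norm1 (cl ω x - cl ω y) ≤ CAP * (2*r) :=
              mul_le_mul_of_nonneg_left h2 (by linarith)
          _ = 2 * CAP * r := by ring
      have hne : chem ω (cl ω x) (cl ω y) ≠ ⊤ :=
        hconnω _ (hclω x).1 _ (hclω y).1
      have hnotD := hDUV _ hclxU _ hclyB
      rw [hD] at hnotD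
      simp only [Set.mem_setOf_eq, not_and] at hnotD
      have hnle : ¬ ENNReal.ofReal (2 * CAP * r) ≤ chem ω (cl ω x) (cl ω y) :=
        fun hle => (hnotD hle) hne
      exact (not_le.mp hnle).le
    have hsuple : (⨆ (y : V d) (_ : norm1 (x - y) ≤ r), chem ω (cl ω x) (cl ω y))
        ≤ ENNReal.ofReal (2 * CAP * r) :=
      iSup_le fun y => iSup_le fun hy => key y hy
    have hmem : ENNReal.ofReal (3 * CAP * r) ≤
        ⨆ (y : V d) (_ : norm1 (x - y) ≤ r), chem ω (cl ω x) (cl ω y) := hω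
    have hlt : ENNReal.ofReal (2 * CAP * r) < ENNReal.ofReal (3 * CAP * r) := by
      rw [ENNReal.ofReal_lt_ofReal_iff (by nlinarith)]
      nlinarith
    exact hlt.not_ge (hmem.trans hsuple)
  -- measure estimate
  have hmeas : μ {ω | ENNReal.ofReal (3 * CAP * r) ≤
        ⨆ (y : V d) (_ : norm1 (x - y) ≤ r), chem ω (cl ω x) (cl ω y)}
      ≤ μ Gᶜ + (μ (A x) + (μ (⋃ y ∈ S, A y) + μ (⋃ u ∈ U, ⋃ v ∈ B, D u v))) := by
    refine (measure_mono hsub).trans ?_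
    refine (measure_union_le _ _).trans ?_
    gcongr
    refine (measure_union_le _ _).trans ?_
    gcongr
    exact measure_union_le _ _
  have hβ : μ (A x) ≤ ENNReal.ofReal (C1 * Real.exp (-C2 * (r/2))) :=
    hii x (r/2) (by linarith)
  have hSsum : μ (⋃ y ∈ S, A y) ≤
      (S.card : ℝ≥0∞) * ENNReal.ofReal (C1 * Real.exp (-C2 * (r/2))) := by
    refine (measure_biUnion_finset_le S A).trans ?_
    rw [← nsmul_eq_mul]
    exact Finset.sum_le_card_nsmul S _ _ (fun y _ => hii y (r/2) (by linarith))
  have hDsum : μ (⋃ u ∈ U, ⋃ v ∈ B, D u v) ≤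
      (U.card : ℝ≥0∞) * ((B.card : ℝ≥0∞) *
        ENNReal.ofReal (C1 * Real.exp (-C2 * (2 * CAP * r)))) := by
    refine (measure_biUnion_finset_le U _).trans ?_
    rw [← nsmul_eq_mul]
    refine Finset.sum_le_card_nsmul U _ _ (fun u hu => ?_)
    refine (measure_biUnion_finset_le B _).trans ?_
    rw [← nsmul_eq_mul]
    refine Finset.sum_le_card_nsmul B _ _ (fun v hv => ?_)
    refine hi u v (2 * CAP * r) ?_
    have huU : norm1 (x - u) ≤ r/2 := by
      have := hu; rw [hU, Set.Finite.mem_toFinset] at this; exact this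
    have hvB : norm1 (x - v) ≤ 3*r/2 := by
      have := hv; rw [hB, Set.Finite.mem_toFinset] at this; exact this
    have h2 : norm1 (u - v) ≤ 2 * r := by
      calc norm1 (u - v) ≤ norm1 (u - x) + norm1 (x - v) := norm1_triangle _ _ _
        _ ≤ r/2 + 3*r/2 := by
            refine add_le_add ?_ hvB
            rw [norm1_sub_comm]; exact huU
        _ = 2 * r := by ring
    calc CAP * norm1 (u - v) ≤ CAP * (2*r) := mul_le_mul_of_nonneg_left h2 (by linarith)
      _ = 2 * CAP * r := by ring
  -- convert everything to a real inequality
  have hP1 : (1:ℝ) ≤ (3 * r + 3) ^ d := one_le_pow₀ (by linarith)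
  have hScard : (S.card : ℝ) ≤ (3 * r + 3) ^ d := by
    refine (ball_card_le x r hr.le).trans ?_
    exact pow_le_pow_left₀ (by linarith) (by linarith) d
  have hUcard : (U.card : ℝ) ≤ (3 * r + 3) ^ d := by
    refine (ball_card_le x (r/2) (by linarith)).trans ?_
    exact pow_le_pow_left₀ (by linarith) (by linarith) d
  have hBcard : (B.card : ℝ) ≤ (3 * r + 3) ^ d := by
    refine (ball_card_le x (3*r/2) (by linarith)).trans ?_
    exact pow_le_pow_left₀ (by linarith) (by linarith) d
  set P : ℝ := (3 * r + 3) ^ d with hPdef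
  set c : ℝ := C1 * Real.exp (-(C2/2) * r) with hcdef
  have hcpos : 0 < c := by positivity
  have hexp1 : C1 * Real.exp (-C2 * (r/2)) = c := by rw [hcdef]; ring_nf
  have hexp2 : C1 * Real.exp (-C2 * (2 * CAP * r)) ≤ c := by
    rw [hcdef]
    apply mul_le_mul_of_nonneg_left _ hC1.le
    apply Real.exp_le_exp.mpr
    nlinarith [mul_nonneg (mul_nonneg hC2.le hr.le) (by linarith : (0:ℝ) ≤ 2*CAP - 1/2)]
  have hnat : ∀ n : ℕ, (n : ℝ≥0∞) = ENNReal.ofReal (n : ℝ) := fun n =>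
    (ENNReal.ofReal_natCast n).symm
  have h1 : μ (A x) ≤ ENNReal.ofReal c := by
    refine hβ.trans (ENNReal.ofReal_le_ofReal ?_)
    rw [hexp1]
  have h2 : μ (⋃ y ∈ S, A y) ≤ ENNReal.ofReal (P * c) := by
    refine hSsum.trans ?_
    rw [hnat, ← ENNReal.ofReal_mul (Nat.cast_nonneg _)]
    refine ENNReal.ofReal_le_ofReal ?_
    rw [hexp1]
    exact mul_le_mul_of_nonneg_right hScard hcpos.le
  have h3 : μ (⋃ u ∈ U, ⋃ v ∈ B, D u v) ≤ ENNReal.ofReal (P ^ 2 * c) := by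
    refine hDsum.trans ?_
    rw [hnat, hnat, ← ENNReal.ofReal_mul (Nat.cast_nonneg _),
      ← ENNReal.ofReal_mul (Nat.cast_nonneg _)]
    refine ENNReal.ofReal_le_ofReal ?_
    have hBc : (B.card : ℝ) * (C1 * Real.exp (-C2 * (2 * CAP * r))) ≤ P * c :=
      mul_le_mul hBcard hexp2 (by positivity) (by positivity)
    calc (U.card : ℝ) * ((B.card : ℝ) * (C1 * Real.exp (-C2 * (2 * CAP * r))))
        ≤ P * (P * c) := mul_le_mul hUcard hBc (by positivity) (by positivity)
      _ = P ^ 2 * c := by ring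
  calc μ {ω | ENNReal.ofReal (3 * CAP * r) ≤
        ⨆ (y : V d) (_ : norm1 (x - y) ≤ r), chem ω (cl ω x) (cl ω y)}
      ≤ μ Gᶜ + (μ (A x) + (μ (⋃ y ∈ S, A y) + μ (⋃ u ∈ U, ⋃ v ∈ B, D u v))) := hmeas
    _ ≤ 0 + (ENNReal.ofReal c + (ENNReal.ofReal (P * c) + ENNReal.ofReal (P ^ 2 * c))) := by
        rw [hGnull]
        gcongr
    _ = ENNReal.ofReal (c + (P * c + P ^ 2 * c)) := by
        rw [zero_add, ← ENNReal.ofReal_add (by positivity) (by positivity),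
          ← ENNReal.ofReal_add (by positivity) (by positivity)]
    _ = ENNReal.ofReal ((1 + P + P ^ 2) * c) := by
        congr 1
        ring
  done


set_option maxHeartbeats 1000000 in
theorem chemical_distance_maximal_estimate
    {d : ℕ} (hd : 2 ≤ d)
    {Ω : Type*} [MeasurableSpace Ω] (μ : Measure Ω) [IsProbabilityMeasure μ]
    (chem : Ω → V d → V d → ℝ≥0∞)      -- the chemical distance `d_{ω_q}`
    (Cinf : Ω → Set (V d))             -- the infinite cluster `C_∞(ω_q)`
    (cl : Ω → V d → V d)               -- the closest point map `[·]_q`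
    (hcl : ∀ᵐ ω ∂μ, ∀ z : V d, cl ω z ∈ Cinf ω ∧
        ∀ y ∈ Cinf ω, norm1 (z - cl ω z) ≤ norm1 (z - y))
    (hzero : ∀ ω, ∀ z : V d, chem ω z z = 0)
    (hconn : ∀ᵐ ω ∂μ, ∀ y ∈ Cinf ω, ∀ z ∈ Cinf ω, chem ω y z ≠ ⊤)
    (CAP C1 C2 : ℝ) (hCAP : 1 ≤ CAP) (hC1 : 0 < C1) (hC2 : 0 < C2)
    -- estimate (i): `P(t ≤ d_{ω_q}(y,z) < ∞) ≤ C₁ e^{-C₂ t}` for `t ≥ C_AP ‖y-z‖₁`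
    (hi : ∀ y z : V d, ∀ t : ℝ, CAP * norm1 (y - z) ≤ t →
        μ {ω | ENNReal.ofReal t ≤ chem ω y z ∧ chem ω y z ≠ ⊤}
          ≤ ENNReal.ofReal (C1 * Real.exp (-C2 * t)))
    -- estimate (ii): `P(C_∞ ∩ B₁(x,t) = ∅) ≤ C₁ e^{-C₂ t}` for `t ≥ 0`
    (hii : ∀ x : V d, ∀ t : ℝ, 0 ≤ t →
        μ {ω | ∀ y ∈ Cinf ω, ¬ norm1 (y - x) ≤ t}
          ≤ ENNReal.ofReal (C1 * Real.exp (-C2 * t))) :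
    (∃ C3 C4 : ℝ, 0 < C3 ∧ 0 < C4 ∧ ∀ ε : ℝ, 0 < ε → ∀ x : V d,
      μ {ω | ENNReal.ofReal (3 * CAP * ε * norm1 x) ≤
          ⨆ (y : V d) (_ : norm1 (x - y) < ε * norm1 x), chem ω (cl ω x) (cl ω y)}
        ≤ ENNReal.ofReal (C3 * Real.exp (-C4 * ε * norm1 x))) ∧
    ∀ ε : ℝ, 0 < ε → ∀ᵐ ω ∂μ, ∃ R : ℝ, ∀ x : V d, R ≤ norm1 x →
      (⨆ (y : V d) (_ : norm1 (x - y) ≤ ε * norm1 x), chem ω (cl ω x) (cl ω y))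
        < ENNReal.ofReal (3 * CAP * ε * norm1 x) := by
  classical
  obtain ⟨K, hKpos, hKbound⟩ := poly_le_exp (d * 2) (C2/4) (by positivity)
  set C3 : ℝ := max (3 * C1 * K) 1 with hC3def
  set C4 : ℝ := C2/4 with hC4def
  have hC3pos : 0 < C3 := lt_of_lt_of_le one_pos (le_max_right _ _)
  have hC3one : (1:ℝ) ≤ C3 := le_max_right _ _
  have hC4pos : 0 < C4 := by rw [hC4def]; positivity
  -- the main uniform bound, for the event with "≤" in the supremum
  have main : ∀ ε : ℝ, 0 < ε → ∀ x : V d,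
      μ {ω | ENNReal.ofReal (3 * CAP * ε * norm1 x) ≤
          ⨆ (y : V d) (_ : norm1 (x - y) ≤ ε * norm1 x), chem ω (cl ω x) (cl ω y)}
        ≤ ENNReal.ofReal (C3 * Real.exp (-C4 * ε * norm1 x)) := by
    intro ε hε x
    rcases eq_or_lt_of_le (norm1_nonneg x) with h0 | h0
    · -- ‖x‖₁ = 0 : the bound is trivial since μ is a probability measure
      calc μ _ ≤ 1 := prob_le_one
        _ = ENNReal.ofReal 1 := ENNReal.ofReal_one.symm
        _ ≤ ENNReal.ofReal (C3 * Real.exp (-C4 * ε * norm1 x)) := by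
            apply ENNReal.ofReal_le_ofReal
            rw [← h0, mul_zero, Real.exp_zero, mul_one]
            exact hC3one
    · -- ‖x‖₁ > 0
      set r : ℝ := ε * norm1 x with hrdef
      have hrpos : 0 < r := mul_pos hε h0
      have heq1 : 3 * CAP * ε * norm1 x = 3 * CAP * r := by rw [hrdef]; ring
      have hcore := core_bound μ chem Cinf cl hcl hconn CAP C1 C2 hCAP hC1 hC2 hi hii x r hrpos
      rw [heq1]
      refine hcore.trans (ENNReal.ofReal_le_ofReal ?_)
      set P : ℝ := (3 * r + 3) ^ d with hPdef
      have hP1 : (1:ℝ) ≤ P := one_le_pow₀ (by linarith)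
      have hPsq : P ^ 2 ≤ K * Real.exp (C2/4 * r) := by
        rw [hPdef, ← pow_mul]
        exact hKbound r hrpos.le
      have hexprw : -C4 * ε * norm1 x = -C4 * r := by rw [hrdef]; ring
      rw [hexprw]
      have hexpnn : (0:ℝ) < Real.exp (-(C2/2) * r) := Real.exp_pos _
      calc (1 + P + P ^ 2) * (C1 * Real.exp (-(C2/2) * r))
          ≤ 3 * P ^ 2 * (C1 * Real.exp (-(C2/2) * r)) := by
            apply mul_le_mul_of_nonneg_right _ (by positivity)
            nlinarith
        _ ≤ 3 * (K * Real.exp (C2/4 * r)) * (C1 * Real.exp (-(C2/2) * r)) := by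
            apply mul_le_mul_of_nonneg_right _ (by positivity)
            linarith
        _ = 3 * C1 * K * Real.exp (C2/4 * r + -(C2/2) * r) := by
            rw [Real.exp_add]; ring
        _ = 3 * C1 * K * Real.exp (-C4 * r) := by
            congr 2
            rw [hC4def]; ring
        _ ≤ C3 * Real.exp (-C4 * r) :=
            mul_le_mul_of_nonneg_right (le_max_left _ _) (Real.exp_pos _).le
  constructor
  · -- part 1 : the event with strict inequality is contained in the "≤" event
    refine ⟨C3, C4, hC3pos, hC4pos, fun ε hε x => ?_⟩
    refine le_trans (measure_mono ?_) (main ε hε x)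
    intro ω hω
    simp only [Set.mem_setOf_eq] at hω ⊢
    refine le_trans hω ?_
    refine iSup_le fun y => iSup_le fun hy => ?_
    exact le_iSup₂_of_le y hy.le le_rfl
  · -- part 2 : Borel-Cantelli
    intro ε hε
    set E : V d → Set Ω := fun x => {ω | ENNReal.ofReal (3 * CAP * ε * norm1 x) ≤
        ⨆ (y : V d) (_ : norm1 (x - y) ≤ ε * norm1 x), chem ω (cl ω x) (cl ω y)} with hEdef
    set c : ℝ := C4 * ε with hcdef
    have hcpos : 0 < c := mul_pos hC4pos hε
    have hEbound : ∀ x : V d, μ (E x) ≤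
        ENNReal.ofReal C3 * ∏ i, ENNReal.ofReal (Real.exp (-(c * |(x i : ℝ)|))) := by
      intro x
      refine (main ε hε x).trans (le_of_eq ?_)
      have h1 : -C4 * ε * norm1 x = -(c * norm1 x) := by rw [hcdef]; ring
      rw [h1]
      have h2 : Real.exp (-(c * norm1 x)) = ∏ i, Real.exp (-(c * |(x i : ℝ)|)) := by
        rw [← Real.exp_sum]
        congr 1
        rw [norm1, Finset.mul_sum, ← Finset.sum_neg_distrib]
      rw [h2, ENNReal.ofReal_mul hC3pos.le, ENNReal.ofReal_prod_of_nonneg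
        (fun i _ => (Real.exp_pos _).le)]
    have hsum : (∑' x : V d, μ (E x)) ≠ ⊤ := by
      have hle : (∑' x : V d, μ (E x)) ≤
          ∑' x : V d, ENNReal.ofReal C3 *
            ∏ i, ENNReal.ofReal (Real.exp (-(c * |(x i : ℝ)|))) :=
        ENNReal.tsum_le_tsum hEbound
      have heq : (∑' x : V d, ENNReal.ofReal C3 *
            ∏ i, ENNReal.ofReal (Real.exp (-(c * |(x i : ℝ)|))))
          = ENNReal.ofReal C3 *
            (∑' k : ℤ, ENNReal.ofReal (Real.exp (-(c * |(k : ℝ)|)))) ^ d := by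
        rw [ENNReal.tsum_mul_left]
        congr 1
        exact tsum_pi_prod (fun k : ℤ => ENNReal.ofReal (Real.exp (-(c * |(k : ℝ)|)))) d
      refine ne_top_of_le_ne_top ?_ (hle.trans_eq heq)
      exact ENNReal.mul_ne_top ENNReal.ofReal_ne_top
        (ENNReal.pow_ne_top (tsum_g_ne_top c hcpos))
    have hfin : ∀ᵐ ω ∂μ, {x : V d | ω ∈ E x}.Finite :=
      MeasureTheory.ae_finite_setOf_mem hsum
    filter_upwards [hfin] with ω hω
    obtain ⟨R0, hR0⟩ := (hω.image norm1).bddAbove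
    refine ⟨R0 + 1, fun x hx => ?_⟩
    have hnot : ω ∉ E x := by
      intro hmem
      have : norm1 x ≤ R0 := hR0 ⟨x, hmem, rfl⟩
      linarith
    exact not_le.mp hnot
  done


end PercMaximal
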